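/- arXiv:2011.01625 — 4 statements merged into one kernel-verified Lean document; each statement's English description precedes it below -/
import Mathlib

section
/- For every value function v : Finset (Fin n) → ℝ and every feature i ∈ Fin n, the uniform average of the per-permutation contributions equals the classical Shapley subset formula: (1/n!) · ∑_{π ∈ Perm(Fin n)} φ_i(π) = ∑_{S ⊆ Fin n \ {i}} (|S|! · (n − |S| − 1)! / n!) · (v(S ∪ {i}) − v(S)). -/
open Finset

/-- The set of features that strictly precede `i` in the order given by `π`. -/
def precedingSet {n : ℕ} (π : Equiv.Perm (Fin n)) (i : Fin n) : Finset (Fin n) :=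
  Finset.univ.filter (fun j => π j < π i)

lemma mem_precedingSet {n : ℕ} {π : Equiv.Perm (Fin n)} {i j : Fin n} :
    j ∈ precedingSet π i ↔ (π j : ℕ) < (π i : ℕ) := by
  rw [precedingSet, Finset.mem_filter]
  exact ⟨fun h => h.2, fun h => ⟨Finset.mem_univ _, h⟩⟩

lemma card_precedingSet {n : ℕ} (π : Equiv.Perm (Fin n)) (i : Fin n) :
    (precedingSet π i).card = (π i : ℕ) := by
  have h : precedingSet π i = (Finset.Iio (π i)).map ⟨π.symm, π.symm.injective⟩ := by
    ext j
    simp only [mem_precedingSet, Finset.mem_map, Finset.mem_Iio, Function.Embedding.coeFn_mk]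
    constructor
    · intro hlt; exact ⟨π j, hlt, π.symm_apply_apply j⟩
    · rintro ⟨k, hk, rfl⟩; simpa using hk
  rw [h, Finset.card_map, Fin.card_Iio]

lemma pi_i_val {n : ℕ} {π : Equiv.Perm (Fin n)} {i : Fin n} {S : Finset (Fin n)}
    (hπ : precedingSet π i = S) : (π i : ℕ) = S.card := by
  rw [← hπ, card_precedingSet]

lemma pi_val_lt {n : ℕ} {π : Equiv.Perm (Fin n)} {i : Fin n} {S : Finset (Fin n)}
    (hπ : precedingSet π i = S) {j : Fin n} (hj : j ∈ S) : (π j : ℕ) < S.card := by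
  have h1 : (π j : ℕ) < (π i : ℕ) := mem_precedingSet.mp (hπ ▸ hj)
  have h2 := pi_i_val hπ
  omega

lemma pi_val_gt {n : ℕ} {π : Equiv.Perm (Fin n)} {i : Fin n} {S : Finset (Fin n)}
    (hπ : precedingSet π i = S) {j : Fin n}
    (hj : j ∈ Finset.univ \ insert i S) : S.card < (π j : ℕ) := by
  rw [Finset.mem_sdiff, Finset.mem_insert] at hj
  push_neg at hj
  obtain ⟨-, hji, hjS⟩ := hj
  have h1 : ¬ (π j : ℕ) < (π i : ℕ) := fun hlt => hjS (hπ ▸ mem_precedingSet.mpr hlt)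
  have h2 : (π j : ℕ) ≠ (π i : ℕ) := fun he => hji (π.injective (Fin.ext he))
  have h3 := pi_i_val hπ
  omega

lemma card_T {n : ℕ} {i : Fin n} {S : Finset (Fin n)} (hiS : i ∉ S) :
    (Finset.univ \ insert i S).card = n - S.card - 1 := by
  rw [Finset.card_sdiff_of_subset (Finset.subset_univ _), Finset.card_insert_of_notMem hiS]
  simp; omega

lemma s_lt_n {n : ℕ} {i : Fin n} {S : Finset (Fin n)} (hiS : i ∉ S) : S.card + 1 ≤ n := by
  calc S.card + 1 = (insert i S).card := (Finset.card_insert_of_notMem hiS).symm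
  _ ≤ (Finset.univ : Finset (Fin n)).card := Finset.card_le_card (Finset.subset_univ _)
  _ = n := by simp

noncomputable def fiberEquivFun {n : ℕ} (i : Fin n) (S : Finset (Fin n)) (hiS : i ∉ S)
    (p : {π : Equiv.Perm (Fin n) // precedingSet π i = S}) :
    (↥S ≃ Fin S.card) × (↥(Finset.univ \ insert i S) ≃ Fin (n - S.card - 1)) :=
  ( Equiv.ofBijective (fun j => (⟨(p.1 j : ℕ), pi_val_lt p.2 j.2⟩ : Fin S.card))
      ((Fintype.bijective_iff_injective_and_card _).mpr
        ⟨fun a b hab => by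
          have h := congrArg Fin.val hab
          simp only at h
          exact Subtype.ext (p.1.injective (Fin.ext h)),
          by rw [Fintype.card_coe, Fintype.card_fin]⟩),
    Equiv.ofBijective (fun j => (⟨(p.1 j : ℕ) - S.card - 1, by
        have h1 := pi_val_gt p.2 j.2
        have h2 := (p.1 j).isLt
        have h3 := s_lt_n hiS
        omega⟩ : Fin (n - S.card - 1)))
      ((Fintype.bijective_iff_injective_and_card _).mpr
        ⟨fun a b hab => by
          have h1 := pi_val_gt p.2 a.2
          have h2 := pi_val_gt p.2 b.2
          have h3 := congrArg Fin.val hab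
          simp only at h3
          exact Subtype.ext (p.1.injective (Fin.ext (by omega))),
          by rw [Fintype.card_coe, card_T hiS, Fintype.card_fin]⟩) )

lemma fiberEquivFun_fst_val {n : ℕ} (i : Fin n) (S : Finset (Fin n)) (hiS : i ∉ S)
    (p : {π : Equiv.Perm (Fin n) // precedingSet π i = S}) (j : ↥S) :
    (((fiberEquivFun i S hiS p).1 j : Fin S.card) : ℕ) = (p.1 j : ℕ) := rfl

lemma fiberEquivFun_snd_val {n : ℕ} (i : Fin n) (S : Finset (Fin n)) (hiS : i ∉ S)
    (p : {π : Equiv.Perm (Fin n) // precedingSet π i = S})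
    (j : ↥(Finset.univ \ insert i S)) :
    (((fiberEquivFun i S hiS p).2 j : Fin (n - S.card - 1)) : ℕ)
      = (p.1 j : ℕ) - S.card - 1 := rfl

lemma fiberEquivFun_bijective {n : ℕ} (i : Fin n) (S : Finset (Fin n)) (hiS : i ∉ S) :
    Function.Bijective (fiberEquivFun i S hiS) := by
  constructor
  · intro p q hpq
    have h1 := congrArg Prod.fst hpq
    have h2 := congrArg Prod.snd hpq
    apply Subtype.ext
    apply Equiv.ext
    intro j
    apply Fin.ext
    by_cases hj : j ∈ S
    · have hv := congrArg Fin.val (DFunLike.congr_fun h1 ⟨j, hj⟩)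
      rwa [fiberEquivFun_fst_val, fiberEquivFun_fst_val] at hv
    · by_cases hj2 : j = i
      · subst hj2
        rw [pi_i_val p.2, pi_i_val q.2]
      · have hjT : j ∈ Finset.univ \ insert i S := by
          rw [Finset.mem_sdiff, Finset.mem_insert]; push_neg
          exact ⟨Finset.mem_univ _, hj2, hj⟩
        have hv : ((p.1 : Equiv.Perm (Fin n)) j : ℕ) - S.card - 1
            = ((q.1 : Equiv.Perm (Fin n)) j : ℕ) - S.card - 1 := by
          have hv0 := congrArg Fin.val (DFunLike.congr_fun h2 ⟨j, hjT⟩)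
          rw [fiberEquivFun_snd_val, fiberEquivFun_snd_val] at hv0
          exact hv0
        have g1 := pi_val_gt p.2 hjT
        have g2 := pi_val_gt q.2 hjT
        omega
  · rintro ⟨e1, e2⟩
    classical
    have hslt := s_lt_n hiS
    have hmemT : ∀ j : Fin n, j ∉ S → j ≠ i → j ∈ Finset.univ \ insert i S := by
      intro j h1 h2
      rw [Finset.mem_sdiff, Finset.mem_insert]; push_neg
      exact ⟨Finset.mem_univ _, h2, h1⟩
    set g : Fin n → Fin n := fun j =>
      if hj : j ∈ S then ⟨(e1 ⟨j, hj⟩ : ℕ), by have := (e1 ⟨j, hj⟩).isLt; omega⟩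
      else if hj2 : j = i then ⟨S.card, by omega⟩
      else ⟨S.card + 1 + (e2 ⟨j, hmemT j hj hj2⟩ : ℕ), by
        have := (e2 ⟨j, hmemT j hj hj2⟩).isLt; omega⟩ with hgdef
    have hgS : ∀ (j : Fin n) (hj : j ∈ S), (g j : ℕ) = (e1 ⟨j, hj⟩ : ℕ) := by
      intro j hj; simp only [hgdef, dif_pos hj]
    have hgi : (g i : ℕ) = S.card := by
      simp only [hgdef, dif_neg hiS, dif_pos rfl]
      simp
    have hgT : ∀ (j : Fin n) (h1 : j ∉ S) (h2 : j ≠ i),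
        (g j : ℕ) = S.card + 1 + (e2 ⟨j, hmemT j h1 h2⟩ : ℕ) := by
      intro j h1 h2; simp only [hgdef, dif_neg h1, dif_neg h2]
    have hginj : Function.Injective g := by
      intro a b hab
      have hv : (g a : ℕ) = (g b : ℕ) := congrArg Fin.val hab
      by_cases ha : a ∈ S <;> by_cases hb : b ∈ S
      · rw [hgS a ha, hgS b hb] at hv
        exact congrArg Subtype.val (e1.injective (Fin.ext hv))
      · by_cases hb2 : b = i
        · rw [hgS a ha, hb2, hgi] at hv; have := (e1 ⟨a, ha⟩).isLt; omega
        · rw [hgS a ha, hgT b hb hb2] at hv; have := (e1 ⟨a, ha⟩).isLt; omega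
      · by_cases ha2 : a = i
        · rw [ha2, hgi, hgS b hb] at hv; have := (e1 ⟨b, hb⟩).isLt; omega
        · rw [hgT a ha ha2, hgS b hb] at hv; have := (e1 ⟨b, hb⟩).isLt; omega
      · by_cases ha2 : a = i <;> by_cases hb2 : b = i
        · rw [ha2, hb2]
        · rw [ha2, hgi, hgT b hb hb2] at hv; omega
        · rw [hgT a ha ha2, hb2, hgi] at hv; omega
        · rw [hgT a ha ha2, hgT b hb hb2] at hv
          have hxy : (e2 ⟨a, hmemT a ha ha2⟩ : ℕ) = (e2 ⟨b, hmemT b hb hb2⟩ : ℕ) := by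
            omega
          exact congrArg Subtype.val (e2.injective (Fin.ext hxy))
    let π : Equiv.Perm (Fin n) := Equiv.ofBijective g (Finite.injective_iff_bijective.mp hginj)
    have hπg : ∀ j, π j = g j := fun j => rfl
    have hπ : precedingSet π i = S := by
      ext j
      rw [mem_precedingSet, hπg, hπg, hgi]
      constructor
      · intro hlt
        by_contra hj
        by_cases hj2 : j = i
        · subst hj2; rw [hgi] at hlt; omega
        · rw [hgT j hj hj2] at hlt; omega
      · intro hj; rw [hgS j hj]; exact (e1 ⟨j, hj⟩).isLt
    refine ⟨⟨π, hπ⟩, ?_⟩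
    apply Prod.ext
    · apply Equiv.ext; intro j; apply Fin.ext
      rw [fiberEquivFun_fst_val]
      exact hgS _ j.2
    · apply Equiv.ext; intro j; apply Fin.ext
      show ((fiberEquivFun i S hiS ⟨π, hπ⟩).2 j : ℕ) = (e2 j : ℕ)
      rw [fiberEquivFun_snd_val]
      have hj := j.2
      rw [Finset.mem_sdiff, Finset.mem_insert] at hj
      push_neg at hj
      have hkey : (g (j : Fin n) : ℕ) = S.card + 1 + (e2 j : ℕ) := hgT _ hj.2.2 hj.2.1
      show (g (j : Fin n) : ℕ) - S.card - 1 = _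
      omega

lemma fiber_card {n : ℕ} (i : Fin n) (S : Finset (Fin n)) (hiS : i ∉ S) :
    (Finset.univ.filter fun π : Equiv.Perm (Fin n) => precedingSet π i = S).card
      = Nat.factorial S.card * Nat.factorial (n - S.card - 1) := by
  classical
  rw [← Fintype.card_subtype]
  rw [Fintype.card_congr (Equiv.ofBijective _ (fiberEquivFun_bijective i S hiS))]
  rw [Fintype.card_prod]
  rw [Fintype.card_equiv (Fintype.equivFinOfCardEq (Fintype.card_coe S))]
  rw [Fintype.card_equiv (Fintype.equivFinOfCardEq (by rw [Fintype.card_coe, card_T hiS]))]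
  rw [Fintype.card_coe, Fintype.card_coe, card_T hiS]

/-- The contribution of feature `i` under permutation `π` for value function `v`:
`φ_i(π) = v(S_π(i) ∪ {i}) − v(S_π(i))`. -/
def contrib {n : ℕ} (v : Finset (Fin n) → ℝ) (π : Equiv.Perm (Fin n)) (i : Fin n) : ℝ :=
  v (insert i (precedingSet π i)) - v (precedingSet π i)

/-- The uniform average of the per-permutation contributions equals the classical
Shapley subset formula. -/
theorem uniform_avg_contrib_eq_shapley_formula {n : ℕ} (v : Finset (Fin n) → ℝ) (i : Fin n) :
    (1 / (Nat.factorial n : ℝ)) * ∑ π : Equiv.Perm (Fin n), contrib v π i =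
      ∑ S ∈ (Finset.univ \ {i} : Finset (Fin n)).powerset,
        ((Nat.factorial S.card * Nat.factorial (n - S.card - 1) : ℕ) : ℝ) /
            (Nat.factorial n : ℝ) * (v (insert i S) - v S) := by
  classical
  have hmaps : ∀ π ∈ (Finset.univ : Finset (Equiv.Perm (Fin n))),
      precedingSet π i ∈ (Finset.univ \ {i} : Finset (Fin n)).powerset := by
    intro π _
    rw [Finset.mem_powerset]
    intro j hj
    rw [Finset.mem_sdiff, Finset.mem_singleton]
    refine ⟨Finset.mem_univ _, ?_⟩
    rintro rfl
    exact absurd (mem_precedingSet.mp hj) (lt_irrefl _)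
  have hsum : ∑ π : Equiv.Perm (Fin n), contrib v π i
      = ∑ S ∈ (Finset.univ \ {i} : Finset (Fin n)).powerset,
          ((Nat.factorial S.card * Nat.factorial (n - S.card - 1) : ℕ) : ℝ)
            * (v (insert i S) - v S) := by
    rw [← Finset.sum_fiberwise_of_maps_to hmaps (fun π => contrib v π i)]
    apply Finset.sum_congr rfl
    intro S hS
    have hiS : i ∉ S := by
      rw [Finset.mem_powerset] at hS
      intro h
      have := hS h
      simp at this
    have hconst : ∀ π ∈ Finset.univ.filter
        (fun π : Equiv.Perm (Fin n) => precedingSet π i = S),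
        contrib v π i = v (insert i S) - v S := by
      intro π hπ
      rw [Finset.mem_filter] at hπ
      rw [contrib, hπ.2]
    rw [Finset.sum_congr rfl hconst, Finset.sum_const, fiber_card i S hiS, nsmul_eq_mul]
  rw [hsum, Finset.mul_sum]
  apply Finset.sum_congr rfl
  intro S _
  ring
end

section
/- Symmetry property of (uniform) Shapley values: let v : Finset (Fin n) → ℝ be a value function and i, j ∈ Fin n distinct features such that v(S ∪ {i}) = v(S ∪ {j}) for every S ⊆ Fin n \ {i, j}. Then the uniform Shapley values are equal: (1/n!) ∑_π φ_i(π) = (1/n!) ∑_π φ_j(π). -/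
open Finset

/-- Symmetry property of uniform Shapley values: if `v(S ∪ {i}) = v(S ∪ {j})` for every
`S ⊆ Fin n \ {i, j}`, then the uniform Shapley values of `i` and `j` are equal. -/
theorem uniform_shapley_symmetry {n : ℕ} (v : Finset (Fin n) → ℝ) (i j : Fin n) (hij : i ≠ j)
    (hv : ∀ S : Finset (Fin n), S ⊆ Finset.univ \ {i, j} → v (insert i S) = v (insert j S)) :
    (1 / (Nat.factorial n : ℝ)) * ∑ π : Equiv.Perm (Fin n), contrib v π i =
      (1 / (Nat.factorial n : ℝ)) * ∑ π : Equiv.Perm (Fin n), contrib v π j := by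
  have key : ∀ π : Equiv.Perm (Fin n), contrib v (π * Equiv.swap i j) j = contrib v π i := by
    intro π
    set τ := Equiv.swap i j with hτ
    have hSpre : precedingSet (π * τ) j = (precedingSet π i).image τ := by
      ext k
      simp only [precedingSet, mem_filter, mem_univ, true_and, Finset.mem_image]
      constructor
      · intro hk
        refine ⟨τ k, ?_, by simp [hτ]⟩
        simpa [hτ, Equiv.swap_apply_right] using hk
      · rintro ⟨a, ha, rfl⟩
        simpa [hτ, Equiv.swap_apply_right] using ha
    have hiS : i ∉ precedingSet π i := by simp [precedingSet]
    by_cases hjS : j ∈ precedingSet π i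
    · -- τ maps S to insert i (S.erase j)
      set S := precedingSet π i with hS
      have himg : S.image τ = insert i (S.erase j) := by
        ext k
        simp only [Finset.mem_image, mem_insert, mem_erase]
        constructor
        · rintro ⟨a, ha, rfl⟩
          rcases eq_or_ne a j with rfl | haj
          · left; simp [hτ]
          · rcases eq_or_ne a i with rfl | hai
            · exact absurd ha hiS
            · right
              rw [hτ, Equiv.swap_apply_of_ne_of_ne hai haj]
              exact ⟨haj, ha⟩
        · rintro (rfl | ⟨hkj, hkS⟩)
          · exact ⟨j, hjS, by simp [hτ]⟩
          · have hki : k ≠ i := fun h => hiS (h ▸ hkS)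
            exact ⟨k, hkS, by rw [hτ, Equiv.swap_apply_of_ne_of_ne hki hkj]⟩
      have hsub : S.erase j ⊆ Finset.univ \ {i, j} := by
        intro k hk
        simp only [mem_sdiff, mem_univ, true_and, mem_insert, Finset.mem_singleton]
        push_neg
        exact ⟨fun h => hiS (h ▸ (mem_erase.mp hk).2), (mem_erase.mp hk).1⟩
      have h1 : insert j (insert i (S.erase j)) = insert i S := by
        rw [Finset.insert_comm, Finset.insert_erase hjS]
      have h2 : v (insert i (S.erase j)) = v (insert j (S.erase j)) := hv _ hsub
      have h3 : insert j (S.erase j) = S := Finset.insert_erase hjS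
      simp only [contrib, hSpre, himg, h1, h2, h3]
      rfl
    · have himg : (precedingSet π i).image τ = precedingSet π i := by
        have : ∀ a ∈ precedingSet π i, τ a = a := by
          intro a ha
          have hai : a ≠ i := fun h => hiS (h ▸ ha)
          have haj : a ≠ j := fun h => hjS (h ▸ ha)
          simp [hτ, Equiv.swap_apply_of_ne_of_ne hai haj]
        rw [Finset.image_congr this]; exact Finset.image_id
      have hsub : precedingSet π i ⊆ Finset.univ \ {i, j} := by
        intro k hk
        simp only [mem_sdiff, mem_univ, true_and, mem_insert, Finset.mem_singleton]
        push_neg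
        exact ⟨fun h => hiS (h ▸ hk), fun h => hjS (h ▸ hk)⟩
      simp only [contrib, hSpre, himg, hv _ hsub]
  have hsum : ∑ π : Equiv.Perm (Fin n), contrib v π i
      = ∑ π : Equiv.Perm (Fin n), contrib v π j := by
    calc ∑ π : Equiv.Perm (Fin n), contrib v π i
        = ∑ π : Equiv.Perm (Fin n), contrib v (π * Equiv.swap i j) j := by
          simp only [key]
      _ = ∑ π : Equiv.Perm (Fin n), contrib v π j :=
          Fintype.sum_equiv (Equiv.mulRight (Equiv.swap i j)) _ _ (fun π => rfl)
  rw [hsum]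
end

section
/- Chain model, asymmetric causal Shapley values (pattern R, root cause): let α, β, x₁, x₂ ∈ ℝ and let v : Finset (Fin 2) → ℝ be the value function with v(∅) = 0, v({0}) = β·α·x₁, v({1}) = β·x₂, and v({0,1}) = β·x₂. Taking the asymmetric weight distribution that puts all weight on the single permutation in which feature 0 precedes feature 1 (consistent with the causal ordering X₁ before X₂), the resulting attributions are φ₀ = β·α·x₁ and φ₁ = β·x₂ − β·α·x₁; i.e., all credit for the indirect effect goes to the root cause. -/
open Finset

/-- Chain model, asymmetric causal Shapley values (pattern R, root cause): putting all
weight on the single permutation in which feature `0` precedes feature `1` yields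
`φ₀ = βαx₁` and `φ₁ = βx₂ − βαx₁`. -/
theorem chain_asymmetric_causal_shapley (α β x₁ x₂ : ℝ) (v : Finset (Fin 2) → ℝ)
    (hv0 : v ∅ = 0) (hv1 : v {0} = β * α * x₁) (hv2 : v {1} = β * x₂)
    (hv12 : v {0, 1} = β * x₂)
    (w : Equiv.Perm (Fin 2) → ℝ)
    (hw : ∀ π : Equiv.Perm (Fin 2), w π = if π 0 < π 1 then 1 else 0) :
    ∑ π : Equiv.Perm (Fin 2), w π * contrib v π 0 = β * α * x₁ ∧
      ∑ π : Equiv.Perm (Fin 2), w π * contrib v π 1 = β * x₂ - β * α * x₁ := by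
  have huniv : (univ : Finset (Equiv.Perm (Fin 2))) = {1, Equiv.swap 0 1} := by decide
  have hs1 : precedingSet (1 : Equiv.Perm (Fin 2)) 0 = ∅ := by decide
  have hs2 : precedingSet (1 : Equiv.Perm (Fin 2)) 1 = {0} := by decide
  have hs3 : precedingSet (Equiv.swap (0:Fin 2) 1) 0 = {1} := by decide
  have hs4 : precedingSet (Equiv.swap (0:Fin 2) 1) 1 = ∅ := by decide
  have hne : (1 : Equiv.Perm (Fin 2)) ≠ Equiv.swap 0 1 := by decide
  have h01 : ((1 : Equiv.Perm (Fin 2)) 0 < (1 : Equiv.Perm (Fin 2)) 1) := by decide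
  have h02 : ¬ (Equiv.swap (0:Fin 2) 1 0 < Equiv.swap (0:Fin 2) 1 1) := by decide
  constructor <;>
  · rw [huniv, Finset.sum_insert (by simpa using hne), Finset.sum_singleton,
      hw, hw, if_pos h01, if_neg h02]
    simp only [contrib, hs1, hs2, hs3, hs4]
    have hv12' : v {1, 0} = β * x₂ := by rw [Finset.pair_comm]; exact hv12
    norm_num [hv0, hv1, hv2, hv12, hv12']
end

section
/- Asymmetric Shapley values of the XOR function break symmetry: let f : Bool → Bool → ℝ be given by f a b = 1 if a ≠ b and f a b = 0 if a = b, fix an input (x₁, x₂) ∈ Bool × Bool, and define the value function v : Finset (Fin 2) → ℝ by v(∅) = 1/2, v({0}) = 1/2, v({1}) = 1/2, v({0,1}) = f x₁ x₂ (averaging over uniform independent features outside the coalition). With the asymmetric weight distribution putting all weight on the single permutation in which feature 0 precedes feature 1, the resulting attributions are φ₀ = 0 and φ₁ = f x₁ x₂ − 1/2; in particular (φ₀, φ₁) = (0, 1/2) when f x₁ x₂ = 1 and (φ₀, φ₁) = (0, −1/2) when f x₁ x₂ = 0, even though v satisfies the symmetry hypothesis v(S ∪ {0}) = v(S ∪ {1})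 for all S ⊆ Fin 2 \ {0,1}. -/
open Finset

/-- Asymmetric Shapley values of the XOR function break symmetry: with all weight on the
permutation in which feature `0` precedes feature `1`, the attributions are `φ₀ = 0` and
`φ₁ = f x₁ x₂ − 1/2` (so `(0, 1/2)` when `f x₁ x₂ = 1` and `(0, −1/2)` when `f x₁ x₂ = 0`),
even though `v` satisfies the symmetry hypothesis `v(S ∪ {0}) = v(S ∪ {1})` for all
`S ⊆ Fin 2 \ {0, 1}`. -/
theorem xor_asymmetric_shapley_breaks_symmetry (f : Bool → Bool → ℝ)
    (hf : ∀ a b : Bool, f a b = if a = b then 0 else 1)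
    (x₁ x₂ : Bool) (v : Finset (Fin 2) → ℝ)
    (hv0 : v ∅ = 1 / 2) (hv1 : v {0} = 1 / 2) (hv2 : v {1} = 1 / 2)
    (hv12 : v {0, 1} = f x₁ x₂)
    (w : Equiv.Perm (Fin 2) → ℝ)
    (hw : ∀ π : Equiv.Perm (Fin 2), w π = if π 0 < π 1 then 1 else 0) :
    (∑ π : Equiv.Perm (Fin 2), w π * contrib v π 0 = 0 ∧
      ∑ π : Equiv.Perm (Fin 2), w π * contrib v π 1 = f x₁ x₂ - 1 / 2) ∧
    (f x₁ x₂ = 1 →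
      ∑ π : Equiv.Perm (Fin 2), w π * contrib v π 0 = 0 ∧
      ∑ π : Equiv.Perm (Fin 2), w π * contrib v π 1 = 1 / 2) ∧
    (f x₁ x₂ = 0 →
      ∑ π : Equiv.Perm (Fin 2), w π * contrib v π 0 = 0 ∧
      ∑ π : Equiv.Perm (Fin 2), w π * contrib v π 1 = -(1 / 2)) ∧
    (∀ S : Finset (Fin 2), S ⊆ Finset.univ \ {0, 1} →
      v (insert 0 S) = v (insert 1 S)) := by
  have huniv : (Finset.univ : Finset (Equiv.Perm (Fin 2))) = {1, Equiv.swap 0 1} := by decide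
  have h1 : ∀ i, ∑ π : Equiv.Perm (Fin 2), w π * contrib v π i
      = w 1 * contrib v 1 i + w (Equiv.swap 0 1) * contrib v (Equiv.swap 0 1) i := by
    intro i; rw [huniv, Finset.sum_pair (by decide)]
  have hwid : w 1 = 1 := by rw [hw, if_pos (by decide)]
  have hwsw : w (Equiv.swap 0 1) = 0 := by rw [hw, if_neg (by decide)]
  have hp0 : precedingSet (1 : Equiv.Perm (Fin 2)) 0 = ∅ := by decide
  have hp1 : precedingSet (1 : Equiv.Perm (Fin 2)) 1 = {0} := by decide
  have hc0 : contrib v 1 0 = 0 := by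
    rw [contrib, hp0]; simp [hv0, hv1]
  have hc1 : contrib v 1 1 = f x₁ x₂ - 1 / 2 := by
    rw [contrib, hp1]
    have : insert (1 : Fin 2) ({0} : Finset (Fin 2)) = {0, 1} := by decide
    rw [this, hv12, hv1]
  have hs0 : ∑ π : Equiv.Perm (Fin 2), w π * contrib v π 0 = 0 := by
    rw [h1, hwid, hwsw, hc0]; ring
  have hs1 : ∑ π : Equiv.Perm (Fin 2), w π * contrib v π 1 = f x₁ x₂ - 1 / 2 := by
    rw [h1, hwid, hwsw, hc1]; ring
  have hsym : ∀ S : Finset (Fin 2), S ⊆ Finset.univ \ {0, 1} →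
      v (insert 0 S) = v (insert 1 S) := by
    intro S hS
    have : S = ∅ := by
      have : (Finset.univ : Finset (Fin 2)) \ {0, 1} = ∅ := by decide
      rw [this] at hS; exact Finset.subset_empty.mp hS
    subst this
    simp [hv1, hv2]
  exact ⟨⟨hs0, hs1⟩, fun h => ⟨hs0, by rw [hs1, h]; norm_num⟩,
    fun h => ⟨hs0, by rw [hs1, h]; norm_num⟩, hsym⟩
end
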